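/- Let A be a finite alphabet, φ: A* → A* a morphism in Class P_ret, and u ∈ A^ℕ an infinite word. Then the language L(u) is closed under reversal if and only if the language L(φ(u)) is closed under reversal. -/

import Mathlib

open List

/-- Apply a morphism (given by its values on letters) to a finite word. -/
def applyM {A : Type*} (φ : A → List A) (v : List A) : List A := v.flatMap φ

/-- The set of occurrences of `w` as a factor of `u`:
indices `i` such that the block of `u` of length `|w|` starting at `i` equals `w`. -/
def occs {A : Type*} [DecidableEq A] (w u : List A) : Finset ℕ :=
  (Finset.range (u.length + 1)).filter
    (fun i => i + w.length ≤ u.length ∧ (u.drop i).take w.length = w)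

/-- A morphism `φ` belongs to Class `P_ret` with marker `w` if it is injective on
letters, `w` is a palindrome, and for each letter `a` the word `φ(a)w` is a palindrome
in which `w` occurs exactly twice, namely as a prefix (position `0`) and as a suffix
(position `|φ(a)|`, distinct from `0`). -/
def IsPretWithMarker {A : Type*} [DecidableEq A] (φ : A → List A) (w : List A) : Prop :=
  Function.Injective φ ∧ w.reverse = w ∧
    ∀ a : A, (φ a ++ w).reverse = φ a ++ w ∧
      occs w (φ a ++ w) = {0, (φ a).length} ∧ (φ a).length ≠ 0

/-- The block of length `len` of the infinite word `u` starting at position `i`. -/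
def factorAt {A : Type*} (u : ℕ → A) (i len : ℕ) : List A :=
  (List.range len).map fun k => u (i + k)

/-- `i` is an occurrence of the finite word `v` in the infinite word `u`. -/
def OccursAt {A : Type*} (u : ℕ → A) (v : List A) (i : ℕ) : Prop :=
  factorAt u i v.length = v

/-- `v` belongs to the language of the infinite word `u`, i.e. `v` is a factor of `u`. -/
def InLang {A : Type*} (u : ℕ → A) (v : List A) : Prop := ∃ i, OccursAt u v i

/-- The image `φ(u) = φ(u₀)φ(u₁)φ(u₂)⋯` of an infinite word `u` under a
(non-erasing) morphism `φ`, as an infinite word. -/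
def applyInf {A : Type*} (φ : A → List A) (u : ℕ → A) (n : ℕ) : A :=
  (((List.range (n + 1)).flatMap fun i => φ (u i))).getD n (u 0)

/-- The language of `u` is closed under reversal. -/
def ClosedUnderReversal {A : Type*} (u : ℕ → A) : Prop :=
  ∀ v : List A, InLang u v → InLang u v.reverse

/-- A finite word is rich if its number of palindromic factors (including `ε`)
equals its length plus one. -/
def RichWord {A : Type*} (u : List A) : Prop :=
  {p : List A | p <:+: u ∧ p.reverse = p}.ncard = u.length + 1

/-- An infinite word is rich if all its finite prefixes are rich. -/
def RichInf {A : Type*} (u : ℕ → A) : Prop := ∀ n : ℕ, RichWord (factorAt u 0 n)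

/-- An infinite word is recurrent if each of its factors occurs infinitely often. -/
def Recurrent {A : Type*} (u : ℕ → A) : Prop :=
  ∀ v : List A, InLang u v → ∀ N : ℕ, ∃ i, N ≤ i ∧ OccursAt u v i

/-- `r` is a return word to `w` in the infinite word `u`: `wr ∈ L(u)` and `w`
occurs in `wr` exactly twice, as a prefix and as a suffix. -/
def IsReturnWord {A : Type*} [DecidableEq A] (u : ℕ → A) (w r : List A) : Prop :=
  r ≠ [] ∧ InLang u (w ++ r) ∧ occs w (w ++ r) = {0, r.length}

/-- Left extensions of `x` in the language of `u`. -/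
def leftExt {A : Type*} (u : ℕ → A) (x : List A) : Set A := {a | InLang u (a :: x)}

/-- Right extensions of `x` in the language of `u`. -/
def rightExt {A : Type*} (u : ℕ → A) (x : List A) : Set A := {b | InLang u (x ++ [b])}

/-- Bi-extensions of `x` in the language of `u`. -/
def biExt {A : Type*} (u : ℕ → A) (x : List A) : Set (A × A) :=
  {p | InLang u (p.1 :: (x ++ [p.2]))}

/-- `x` is bispecial in `u`. -/
def Bispecial {A : Type*} (u : ℕ → A) (x : List A) : Prop :=
  2 ≤ (leftExt u x).ncard ∧ 2 ≤ (rightExt u x).ncard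

/-- The bilateral order `b_u(x) = #B_u(x) − #L_u(x) − #R_u(x) + 1`. -/
noncomputable def bilateralOrder {A : Type*} (u : ℕ → A) (x : List A) : ℤ :=
  ((biExt u x).ncard : ℤ) - (leftExt u x).ncard - (rightExt u x).ncard + 1

/-- The number of palindromic extensions of `x` in `u`. -/
noncomputable def pext {A : Type*} (u : ℕ → A) (x : List A) : ℕ :=
  {a | InLang u (a :: (x ++ [a]))}.ncard

/-- Arnoux-Rauzy morphisms: the monoid of morphisms generated by permutations of the
alphabet and by the elementary morphisms `ψ_a : a ↦ a, b ↦ ab` and `ψ̄_a : a ↦ a, b ↦ ba`. -/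
inductive IsAR {A : Type*} [DecidableEq A] : (A → List A) → Prop
  | perm (π : Equiv.Perm A) : IsAR (fun a => [π a])
  | psiL (a : A) : IsAR (fun b => if b = a then [a] else [a, b])
  | psiR (a : A) : IsAR (fun b => if b = a then [a] else [b, a])
  | comp {φ ψ : A → List A} : IsAR φ → IsAR ψ → IsAR (fun a => applyM φ (ψ a))

/-- The `k`-th power `φ^k` of a morphism. -/
def powM {A : Type*} (φ : A → List A) : ℕ → A → List A
  | 0, a => [a]
  | n + 1, a => applyM (powM φ n) (φ a)

/-- A morphism is primitive if some power of it maps every letter to a word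
containing every letter. -/
def PrimitiveM {A : Type*} (φ : A → List A) : Prop :=
  ∃ k : ℕ, ∀ a b : A, b ∈ powM φ k a

/-- A (acyclic) morphism is marked: it has a rightmost conjugate `φR` whose
last-letter map is injective, and a leftmost conjugate `φL` whose first-letter map
is injective. -/
def Marked {A : Type*} (φ : A → List A) : Prop :=
  ∃ (φR φL : A → List A) (x y : List A),
    (∀ a, φ a ++ x = x ++ φR a) ∧
    (∀ a, φL a ++ y = y ++ φ a) ∧
    (∃ a b : A, (φR a).getLast? ≠ (φR b).getLast?) ∧
    (∃ a b : A, (φL a).head? ≠ (φL b).head?) ∧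
    Function.Injective (fun c => (φR c).getLast?) ∧
    Function.Injective (fun c => (φL c).head?)

namespace PretAux

variable {A : Type*}

lemma slice_append_left (l₁ l₂ : List A) {p q : ℕ} (h : p + q ≤ l₁.length) :
    ((l₁ ++ l₂).drop p).take q = (l₁.drop p).take q := by
  rw [drop_append, take_append]
  have h1 : (l₁.drop p).length = l₁.length - p := by simp
  have h2 : q - (l₁.drop p).length = 0 := by omega
  rw [h2, take_zero, append_nil]

lemma drop_append_right (l₁ l₂ : List A) {p : ℕ} (h : l₁.length ≤ p) :
    (l₁ ++ l₂).drop p = l₂.drop (p - l₁.length) := by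
  rw [drop_append, drop_eq_nil_of_le h, nil_append]

lemma take_append_left (l₁ l₂ : List A) {q : ℕ} (h : l₁.length ≤ q) :
    (l₁ ++ l₂).take q = l₁ ++ l₂.take (q - l₁.length) := by
  rw [take_append, take_of_length_le h]

@[simp] lemma length_factorAt (u : ℕ → A) (i len : ℕ) : (factorAt u i len).length = len := by
  simp [factorAt]

lemma getElem_factorAt (u : ℕ → A) {i len k : ℕ} (hk : k < (factorAt u i len).length) :
    (factorAt u i len)[k] = u (i + k) := by
  simp [factorAt]

lemma factorAt_add (u : ℕ → A) (i a b : ℕ) :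
    factorAt u i (a + b) = factorAt u i a ++ factorAt u (i + a) b := by
  apply List.ext_getElem
  · simp
  · intro k h1 h2
    rcases lt_or_ge k a with hk | hk
    · rw [getElem_append_left (by simpa using hk), getElem_factorAt, getElem_factorAt]
    · rw [getElem_append_right (by simpa using hk), getElem_factorAt, getElem_factorAt]
      simp only [length_factorAt]
      congr 1
      omega

lemma slice_factorAt (u : ℕ → A) {i l p q : ℕ} (h : p + q ≤ l) :
    ((factorAt u i l).drop p).take q = factorAt u (i + p) q := by
  apply List.ext_getElem
  · simp; omega
  · intro k h1 h2
    rw [getElem_take, getElem_drop, getElem_factorAt, getElem_factorAt]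
    congr 1; omega

lemma factorAt_succ (u : ℕ → A) (i k : ℕ) :
    factorAt u i (k + 1) = factorAt u i k ++ [u (i + k)] := by
  rw [factorAt_add]
  simp [factorAt, List.range_succ]

lemma factorAt_cons (u : ℕ → A) (i k : ℕ) :
    factorAt u i (k + 1) = u i :: factorAt u (i + 1) k := by
  rw [show k + 1 = 1 + k by omega, factorAt_add]
  simp [factorAt, List.range_succ]


variable {A : Type*}

@[simp] lemma applyM_nil (φ : A → List A) : applyM φ [] = [] := rfl
lemma applyM_cons (φ : A → List A) (a : A) (v : List A) :
    applyM φ (a :: v) = φ a ++ applyM φ v := rfl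
lemma applyM_append (φ : A → List A) (v₁ v₂ : List A) :
    applyM φ (v₁ ++ v₂) = applyM φ v₁ ++ applyM φ v₂ := by
  simp [applyM, flatMap_append]
lemma applyM_singleton (φ : A → List A) (a : A) : applyM φ [a] = φ a := by
  simp [applyM]

lemma length_le_applyM {φ : A → List A} (hφ : ∀ a, φ a ≠ []) (v : List A) :
    v.length ≤ (applyM φ v).length := by
  induction v with
  | nil => simp
  | cons a v ih =>
    rw [applyM_cons, length_append, length_cons]
    have : 1 ≤ (φ a).length := length_pos_iff.mpr (hφ a)
    omega

/-- the prefix of φ(u) given by the first m blocks -/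
lemma pref_eq (φ : A → List A) (u : ℕ → A) (m : ℕ) :
    applyM φ (factorAt u 0 m) = (List.range m).flatMap fun i => φ (u i) := by
  simp only [applyM, factorAt, flatMap_map]
  congr 1
  ext k
  simp

lemma pref_prefix (φ : A → List A) (u : ℕ → A) {m m' : ℕ} (h : m ≤ m') :
    applyM φ (factorAt u 0 m) <+: applyM φ (factorAt u 0 m') := by
  have : factorAt u 0 m' = factorAt u 0 m ++ factorAt u (0 + m) (m' - m) := by
    rw [← factorAt_add]; congr 1; omega
  rw [this, applyM_append]
  exact prefix_append _ _

lemma applyInf_eq {φ : A → List A} (hφ : ∀ a, φ a ≠ []) (u : ℕ → A) {n m : ℕ}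
    (hn : n < (applyM φ (factorAt u 0 m)).length) :
    applyInf φ u n = (applyM φ (factorAt u 0 m))[n] := by
  have hlen : n < (applyM φ (factorAt u 0 (n + 1))).length := by
    have := length_le_applyM hφ (factorAt u 0 (n + 1))
    simp only [length_factorAt] at this
    omega
  have key : applyInf φ u n = (applyM φ (factorAt u 0 (n + 1)))[n] := by
    rw [applyInf, ← pref_eq, getD_eq_getElem _ _ hlen]
  rw [key]
  rcases le_total (n + 1) m with hm | hm
  · exact (pref_prefix φ u hm).getElem hlen
  · exact ((pref_prefix φ u hm).getElem hn).symm

lemma factorAt_applyInf {φ : A → List A} (hφ : ∀ a, φ a ≠ []) (u : ℕ → A) {i len m : ℕ}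
    (hm : i + len ≤ (applyM φ (factorAt u 0 m)).length) :
    factorAt (applyInf φ u) i len = ((applyM φ (factorAt u 0 m)).drop i).take len := by
  apply List.ext_getElem
  · simp; omega
  · intro k h1 h2
    have hk : i + k < (applyM φ (factorAt u 0 m)).length := by
      simp only [length_factorAt] at h1; omega
    rw [getElem_take, getElem_drop, getElem_factorAt, applyInf_eq hφ u (m := m) hk]


section Occ
variable {A : Type*}

lemma occursAt_iff (u : ℕ → A) (v : List A) (i : ℕ) :
    OccursAt u v i ↔ factorAt u i v.length = v := Iff.rfl

lemma occursAt_take {u : ℕ → A} {v : List A} {i : ℕ} (h : OccursAt u v i) (q : ℕ) :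
    OccursAt u (v.take q) i := by
  rcases le_total v.length q with hq | hq
  · rwa [take_of_length_le hq]
  · have := slice_factorAt u (i := i) (l := v.length) (p := 0) (q := q) (by omega)
    rw [h, drop_zero] at this
    rw [add_zero] at this
    show factorAt u i (v.take q).length = v.take q
    rw [length_take, min_eq_left hq]
    exact this.symm

lemma occursAt_prefix {u : ℕ → A} {v v' : List A} {i : ℕ} (h : OccursAt u v i)
    (hp : v' <+: v) : OccursAt u v' i := by
  have h2 := occursAt_take h v'.length
  rwa [← List.prefix_iff_eq_take.mp hp] at h2

lemma occursAt_append_right {u : ℕ → A} {v₁ v₂ : List A} {i : ℕ}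
    (h : OccursAt u (v₁ ++ v₂) i) : OccursAt u v₂ (i + v₁.length) := by
  have hs := slice_factorAt u (i := i) (l := (v₁ ++ v₂).length)
      (p := v₁.length) (q := v₂.length) (by simp)
  rw [h, drop_append_right _ _ le_rfl, Nat.sub_self, drop_zero,
    take_of_length_le le_rfl] at hs
  exact hs.symm

lemma occursAt_of_infix {u : ℕ → A} {v : List A} {i l : ℕ} {s t : List A}
    (h : s ++ v ++ t = factorAt u i l) : OccursAt u v (i + s.length) := by
  have hl : s.length + v.length + t.length = l := by
    have := congrArg List.length h
    simp at this
    omega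
  have hs := slice_factorAt u (i := i) (l := l) (p := s.length) (q := v.length) (by omega)
  rw [← h, append_assoc, drop_append_right _ _ le_rfl, Nat.sub_self, drop_zero,
    take_append, Nat.sub_self, take_zero, append_nil,
    take_of_length_le le_rfl] at hs
  exact hs.symm

end Occ

section Bnd
variable {A : Type*}

/-- block boundary positions -/
def Bnd (φ : A → List A) (u : ℕ → A) (j : ℕ) : ℕ := (applyM φ (factorAt u 0 j)).length

@[simp] lemma Bnd_zero (φ : A → List A) (u : ℕ → A) : Bnd φ u 0 = 0 := by
  simp [Bnd, factorAt]

lemma Bnd_add (φ : A → List A) (u : ℕ → A) (j k : ℕ) :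
    Bnd φ u (j + k) = Bnd φ u j + (applyM φ (factorAt u j k)).length := by
  have : factorAt u 0 (j + k) = factorAt u 0 j ++ factorAt u (0 + j) k := factorAt_add u 0 j k
  rw [Bnd, this, applyM_append, length_append]
  simp [Bnd]

lemma Bnd_succ (φ : A → List A) (u : ℕ → A) (j : ℕ) :
    Bnd φ u (j + 1) = Bnd φ u j + (φ (u j)).length := by
  rw [Bnd_add]
  congr 2
  simp [factorAt, List.range_succ, applyM_singleton]

lemma Bnd_ge {φ : A → List A} (hφ : ∀ a, φ a ≠ []) (u : ℕ → A) (j : ℕ) : j ≤ Bnd φ u j := by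
  have := length_le_applyM hφ (factorAt u 0 j)
  simpa [Bnd] using this

lemma Bnd_le_add {φ : A → List A} (hφ : ∀ a, φ a ≠ []) (u : ℕ → A) (j k : ℕ) :
    Bnd φ u j + k ≤ Bnd φ u (j + k) := by
  rw [Bnd_add]
  have := length_le_applyM hφ (factorAt u j k)
  simp only [length_factorAt] at this
  omega

end Bnd

section Pret
variable {A : Type*} [DecidableEq A] {φ : A → List A} {w : List A}

lemma mem_occs {w L : List A} {i : ℕ} :
    i ∈ occs w L ↔ i + w.length ≤ L.length ∧ (L.drop i).take w.length = w := by
  simp only [occs, Finset.mem_filter, Finset.mem_range]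
  constructor
  · rintro ⟨-, h1, h2⟩; exact ⟨h1, h2⟩
  · rintro ⟨h1, h2⟩; exact ⟨by omega, h1, h2⟩

lemma hne' (h : IsPretWithMarker φ w) : ∀ a : A, φ a ≠ [] := by
  intro a hh
  have := (h.2.2 a).2.2
  rw [hh] at this
  simp at this

lemma occ_phi (h : IsPretWithMarker φ w) (a : A) {i : ℕ}
    (h1 : i + w.length ≤ (φ a).length + w.length)
    (h2 : ((φ a ++ w).drop i).take w.length = w) : i = 0 ∨ i = (φ a).length := by
  have hm : i ∈ occs w (φ a ++ w) := mem_occs.mpr ⟨by simpa using h1, h2⟩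
  rw [(h.2.2 a).2.1] at hm
  simpa using hm

lemma w_prefix_phi (h : IsPretWithMarker φ w) (a : A) : ∃ t, φ a ++ w = w ++ t := by
  have h0 : (0 : ℕ) ∈ occs w (φ a ++ w) := by rw [(h.2.2 a).2.1]; simp
  obtain ⟨-, h2⟩ := mem_occs.mp h0
  rw [drop_zero] at h2
  refine ⟨(φ a ++ w).drop w.length, ?_⟩
  conv_lhs => rw [← take_append_drop w.length (φ a ++ w)]
  rw [h2]

lemma w_prefix_applyM (h : IsPretWithMarker φ w) :
    ∀ y : List A, ∃ t, applyM φ y ++ w = w ++ t := by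
  intro y
  induction y with
  | nil => exact ⟨[], by simp⟩
  | cons a y ih =>
    obtain ⟨t, ht⟩ := ih
    obtain ⟨s, hs⟩ := w_prefix_phi h a
    refine ⟨s ++ t, ?_⟩
    rw [applyM_cons, append_assoc, ht, ← append_assoc, hs, append_assoc]

lemma take_w_applyM (h : IsPretWithMarker φ w) {y : List A}
    (hy : w.length ≤ (applyM φ y).length) : (applyM φ y).take w.length = w := by
  obtain ⟨t, ht⟩ := w_prefix_applyM h y
  have h1 : (applyM φ y ++ w).take w.length = (applyM φ y).take w.length := by
    rw [take_append, Nat.sub_eq_zero_of_le hy, take_zero, append_nil]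
  have h2 : (w ++ t).take w.length = w := by
    rw [take_append, Nat.sub_self, take_zero, append_nil, take_length]
  rw [← h1, ht, h2]

lemma rev_applyM (h : IsPretWithMarker φ w) :
    ∀ y : List A, (applyM φ y ++ w).reverse = applyM φ y.reverse ++ w := by
  intro y
  induction y with
  | nil => simp [h.2.1]
  | cons a y ih =>
    have hwa : w ++ (φ a).reverse = φ a ++ w := by
      have hp := (h.2.2 a).1
      rwa [reverse_append, h.2.1] at hp
    calc ((applyM φ (a :: y)) ++ w).reverse
        = (applyM φ y ++ w).reverse ++ (φ a).reverse := by
          rw [applyM_cons, append_assoc, reverse_append]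
      _ = applyM φ y.reverse ++ (w ++ (φ a).reverse) := by rw [ih, append_assoc]
      _ = applyM φ y.reverse ++ (applyM φ [a] ++ w) := by rw [hwa, applyM_singleton]
      _ = applyM φ (a :: y).reverse ++ w := by
          rw [reverse_cons, applyM_append, append_assoc]

lemma sync_occ (h : IsPretWithMarker φ w) :
    ∀ (y : List A) (p : ℕ), p + w.length ≤ (applyM φ y ++ w).length →
    ((applyM φ y ++ w).drop p).take w.length = w →
    ∃ k ≤ y.length, p = (applyM φ (y.take k)).length := by
  intro y
  induction y with
  | nil =>
    intro p h1 _
    refine ⟨0, by simp, ?_⟩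
    simp only [take_zero, applyM_nil, nil_append, length_nil] at h1 ⊢
    omega
  | cons a y ih =>
    intro p h1 h2
    rcases le_or_gt (φ a).length p with hp | hp
    · have hd : (applyM φ (a :: y) ++ w).drop p
          = (applyM φ y ++ w).drop (p - (φ a).length) := by
        rw [applyM_cons, append_assoc, drop_append_right _ _ hp]
      rw [hd] at h2
      have h1' : (p - (φ a).length) + w.length ≤ (applyM φ y ++ w).length := by
        rw [applyM_cons] at h1
        simp only [length_append] at h1 ⊢
        omega
      obtain ⟨k, hk, hpk⟩ := ih _ h1' h2
      refine ⟨k + 1, by simpa using hk, ?_⟩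
      rw [take_succ_cons, applyM_cons, length_append]
      omega
    · obtain ⟨t, ht⟩ := w_prefix_applyM h y
      have hL : applyM φ (a :: y) ++ w = (φ a ++ w) ++ t := by
        rw [applyM_cons, append_assoc, ht, ← append_assoc]
      have h2' : ((φ a ++ w).drop p).take w.length = w := by
        rw [hL, slice_append_left _ _ (by simp only [length_append]; omega)] at h2
        exact h2
      have hdis := occ_phi h a (i := p) (by omega) h2'
      refine ⟨0, by simp, ?_⟩
      simp only [take_zero, applyM_nil, length_nil]
      omega

lemma occursAt_length_le {u : ℕ → A} {v v' : List A} {i : ℕ} (h1 : OccursAt u v i)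
    (h2 : OccursAt u v' i) (hl : v.length ≤ v'.length) : v <+: v' := by
  have h3 := occursAt_take h2 v.length
  rw [OccursAt, length_take, min_eq_left hl] at h3
  rw [OccursAt] at h1
  rw [show v = v'.take v.length from h1.symm.trans h3]
  exact take_prefix _ _

lemma letter_aux (h : IsPretWithMarker φ w) (u : ℕ → A) {a b : A} {i : ℕ}
    (hab : (φ a).length ≤ (φ b).length)
    (ha : OccursAt (applyInf φ u) (φ a ++ w) i)
    (hb : OccursAt (applyInf φ u) (φ b ++ w) i) : a = b := by
  have hpre : (φ a ++ w) <+: (φ b ++ w) :=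
    occursAt_length_le ha hb (by simp only [length_append]; omega)
  obtain ⟨t, ht⟩ := hpre
  have hocc2 : ((φ b ++ w).drop (φ a).length).take w.length = w := by
    rw [← ht, append_assoc, drop_append_right _ _ le_rfl, Nat.sub_self, drop_zero,
      take_append, Nat.sub_self, take_zero, append_nil, take_length]
  have hdis := occ_phi h b (by omega) hocc2
  have hna := (h.2.2 a).2.2
  have hlen : (φ a).length = (φ b).length := by omega
  have htn : t = [] := by
    have hlt := congrArg List.length ht
    simp only [length_append] at hlt
    rw [← length_eq_zero_iff]
    omega
  rw [htn, append_nil] at ht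
  exact h.1 (append_cancel_right ht)

lemma letter_id (h : IsPretWithMarker φ w) (u : ℕ → A) {a b : A} {i : ℕ}
    (ha : OccursAt (applyInf φ u) (φ a ++ w) i)
    (hb : OccursAt (applyInf φ u) (φ b ++ w) i) : a = b := by
  rcases le_total (φ a).length (φ b).length with hl | hl
  · exact letter_aux h u hl ha hb
  · exact (letter_aux h u hl hb ha).symm

lemma encode (h : IsPretWithMarker φ w) (u : ℕ → A) (j k : ℕ) :
    OccursAt (applyInf φ u) (applyM φ (factorAt u j k) ++ w) (Bnd φ u j) := by
  have hφ := hne' h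
  set f := factorAt u j k with hf
  set z := factorAt u (j + k) w.length with hz
  have hm : factorAt u 0 (j + k + w.length) = factorAt u 0 j ++ (f ++ z) := by
    rw [factorAt_add u 0 (j + k) w.length, factorAt_add u 0 j k]
    simp only [zero_add]
    rw [append_assoc]
  have hzlen : w.length ≤ (applyM φ z).length := by
    have h1 := length_le_applyM hφ z
    rw [hz, length_factorAt] at h1
    exact h1
  show factorAt (applyInf φ u) (Bnd φ u j) (applyM φ f ++ w).length = applyM φ f ++ w
  rw [factorAt_applyInf hφ u (m := j + k + w.length)
    (by rw [hm, applyM_append, applyM_append, length_append, length_append, length_append]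
        show Bnd φ u j + _ ≤ _
        rw [Bnd]
        omega)]
  rw [hm, applyM_append,
    show Bnd φ u j = (applyM φ (factorAt u 0 j)).length from rfl,
    drop_append_right _ _ le_rfl, Nat.sub_self, drop_zero, applyM_append,
    length_append, take_append_left _ _ (by omega), Nat.add_sub_cancel_left,
    take_w_applyM h hzlen]

lemma occ_w_boundary (h : IsPretWithMarker φ w) (u : ℕ → A) {p : ℕ}
    (hw : OccursAt (applyInf φ u) w p) : ∃ j, p = Bnd φ u j := by
  have hφ := hne' h
  set M := p + w.length with hM
  have hz : p + w.length ≤ (applyM φ (factorAt u 0 M)).length := by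
    have h1 := length_le_applyM hφ (factorAt u 0 M)
    rw [length_factorAt] at h1
    omega
  have hs : ((applyM φ (factorAt u 0 M)).drop p).take w.length = w := by
    have h2 := factorAt_applyInf hφ u (i := p) (len := w.length) (m := M) hz
    rw [OccursAt] at hw
    rw [← h2, hw]
  have hs' : ((applyM φ (factorAt u 0 M) ++ w).drop p).take w.length = w := by
    rw [slice_append_left _ _ hz]; exact hs
  obtain ⟨k, hk, hpk⟩ := sync_occ h (factorAt u 0 M) p
    (by rw [length_append]; omega) hs'
  refine ⟨k, ?_⟩
  rw [length_factorAt] at hk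
  have htake : (factorAt u 0 M).take k = factorAt u 0 k := by
    have h3 := slice_factorAt u (i := 0) (l := M) (p := 0) (q := k) (by omega)
    simpa using h3
  rw [hpk, htake]; rfl

lemma decode (h : IsPretWithMarker φ w) (u : ℕ → A) :
    ∀ (y : List A) (j : ℕ),
    OccursAt (applyInf φ u) (applyM φ y ++ w) (Bnd φ u j) →
    y = factorAt u j y.length := by
  intro y
  induction y with
  | nil => intro j _; simp [factorAt]
  | cons a y ih =>
    intro j hy
    have haw : OccursAt (applyInf φ u) (φ a ++ w) (Bnd φ u j) := by
      apply occursAt_prefix hy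
      obtain ⟨t, ht⟩ := w_prefix_applyM h y
      rw [applyM_cons, append_assoc, ht, ← append_assoc]
      exact prefix_append _ _
    have hbw : OccursAt (applyInf φ u) (φ (u j) ++ w) (Bnd φ u j) := by
      have he := encode h u j 1
      rwa [show factorAt u j 1 = [u j] by simp [factorAt, List.range_succ], applyM_singleton] at he
    have ha : a = u j := letter_id h u haw hbw
    have hy' : OccursAt (applyInf φ u) (φ a ++ (applyM φ y ++ w)) (Bnd φ u j) := by
      rwa [applyM_cons, append_assoc] at hy
    have h2 := occursAt_append_right hy'
    rw [ha, ← Bnd_succ] at h2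
    have h3 := ih (j + 1) h2
    rw [length_cons, factorAt_cons, ← h3, ha]

end Pret

-- MORE

end PretAux

/-- For a `P_ret` morphism `φ`, the language of `u` is closed under
reversal iff the language of `φ(u)` is closed under reversal. -/
theorem pret_closed_under_reversal_iff {A : Type*} [Fintype A] [DecidableEq A]
    (φ : A → List A) (w : List A) (h : IsPretWithMarker φ w) (u : ℕ → A) :
    ClosedUnderReversal u ↔ ClosedUnderReversal (applyInf φ u) := by
  have hφ : ∀ a, φ a ≠ [] := PretAux.hne' h
  constructor
  · -- u closed → φ(u) closed
    intro hcl v hv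
    obtain ⟨i, hi⟩ := hv
    have hex : ∃ j, i < PretAux.Bnd φ u (j + 1) :=
      ⟨i, lt_of_lt_of_le (Nat.lt_succ_self i) (PretAux.Bnd_ge hφ u (i + 1))⟩
    set j := Nat.find hex with hjdef
    have hspec : i < PretAux.Bnd φ u (j + 1) := Nat.find_spec hex
    have hji : PretAux.Bnd φ u j ≤ i := by
      rcases Nat.eq_zero_or_pos j with h0 | h0
      · rw [h0]; simp
      · obtain ⟨j', hjj⟩ : ∃ j', j = j' + 1 := ⟨j - 1, by omega⟩
        have hmin := Nat.find_min hex (m := j') (by omega)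
        rw [hjj]
        omega
    set n := v.length with hn
    set k := n + 1 with hk
    have hik : i + n ≤ PretAux.Bnd φ u (j + k) := by
      have h2 := PretAux.Bnd_le_add hφ u (j + 1) n
      rw [show j + 1 + n = j + k by omega] at h2
      omega
    set x := factorAt u j k with hx
    have hsplit : factorAt u 0 (j + k) = factorAt u 0 j ++ x := by
      rw [hx]
      have h4 := PretAux.factorAt_add u 0 j k
      simpa using h4
    have hsl : v = ((applyM φ x).drop (i - PretAux.Bnd φ u j)).take n := by
      have hle : i + n ≤ (applyM φ (factorAt u 0 (j + k))).length := hik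
      have hfe := PretAux.factorAt_applyInf hφ u (i := i) (len := n) (m := j + k) hle
      rw [OccursAt, ← hn] at hi
      rw [← hi, hfe, hsplit, PretAux.applyM_append,
        PretAux.drop_append_right _ _ (by exact hji)]
      rfl
    have hinf : v <:+: applyM φ x := by
      rw [hsl]
      exact ((take_prefix _ _).isInfix).trans ((drop_suffix _ _).isInfix)
    have hxlang : InLang u x := by
      refine ⟨j, ?_⟩
      show factorAt u j x.length = x
      rw [hx, PretAux.length_factorAt]
    obtain ⟨j', hj'⟩ := hcl x hxlang
    have henc : OccursAt (applyInf φ u) (applyM φ x.reverse ++ w) (PretAux.Bnd φ u j') := by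
      have he := PretAux.encode h u j' x.reverse.length
      rw [OccursAt] at hj'
      rwa [hj'] at he
    have hinf2 : v.reverse <:+: applyM φ x.reverse ++ w := by
      have h1 : v.reverse <:+: (applyM φ x).reverse := reverse_infix.mpr hinf
      have h2 : (applyM φ x).reverse <:+: (applyM φ x ++ w).reverse :=
        reverse_infix.mpr ((prefix_append _ _).isInfix)
      have h3 := h1.trans h2
      rwa [PretAux.rev_applyM h x] at h3
    obtain ⟨s, t, hst⟩ := hinf2
    exact ⟨PretAux.Bnd φ u j' + s.length,
      PretAux.occursAt_of_infix (hst.trans henc.symm)⟩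
  · -- φ(u) closed → u closed
    intro hcl x hx
    obtain ⟨j, hj⟩ := hx
    have henc : OccursAt (applyInf φ u) (applyM φ x ++ w) (PretAux.Bnd φ u j) := by
      have he := PretAux.encode h u j x.length
      rw [OccursAt] at hj
      rwa [hj] at he
    have hrev : InLang (applyInf φ u) (applyM φ x ++ w).reverse := hcl _ ⟨_, henc⟩
    rw [PretAux.rev_applyM h x] at hrev
    obtain ⟨p, hp⟩ := hrev
    have hwp : OccursAt (applyInf φ u) w p := by
      obtain ⟨t, ht⟩ := PretAux.w_prefix_applyM h x.reverse
      exact PretAux.occursAt_prefix hp (by rw [ht]; exact prefix_append _ _)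
    obtain ⟨j', hj'⟩ := PretAux.occ_w_boundary h u hwp
    rw [hj'] at hp
    exact ⟨j', (PretAux.decode h u x.reverse j' hp).symm⟩
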